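/- arXiv:2503.00001 — 3 statements merged into one kernel-verified Lean document; each statement's English description precedes it below -/
import Mathlib

section
/- Let Q(z,w) = p_1(w)q_1(z) + p_2(w)q_2(z) be a bivariate polynomial over ℂ where {p_1, p_2} are linearly independent univariate polynomials in w and {q_1, q_2} are linearly independent univariate polynomials in z. Then for every d ≥ 1, the coefficient matrix of Q^d has rank exactly d + 1. -/
open Polynomial

lemma pow_li (p₁ p₂ : Polynomial ℂ) (hp : LinearIndependent ℂ ![p₁, p₂]) (d : ℕ) :
    LinearIndependent ℂ (fun i : Fin (d + 1) => p₁ ^ (i : ℕ) * p₂ ^ (d - (i : ℕ))) := by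
  have h2 := linearIndependent_fin2.mp hp
  have hp2 : p₂ ≠ 0 := by simpa using h2.1
  have hnp : ∀ a : ℂ, a • p₂ ≠ p₁ := by simpa using h2.2
  set K := RatFunc ℂ
  set φ := algebraMap (Polynomial ℂ) K with hφdef
  have hφ : Function.Injective φ := IsFractionRing.injective _ _
  have hφ2 : φ p₂ ≠ 0 := fun h => hp2 (hφ (by simpa using h))
  set f : K := φ p₁ / φ p₂ with hfdef
  have hfr : ∀ c : ℂ, f ≠ algebraMap ℂ K c := by
    intro c hc
    apply hnp c
    apply hφ
    have h3 : φ p₁ = algebraMap ℂ K c * φ p₂ := by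
      rw [← hc, hfdef, div_mul_cancel₀ _ hφ2]
    calc φ (c • p₂) = algebraMap ℂ K c * φ p₂ := by
          rw [Algebra.smul_def, map_mul, ← IsScalarTower.algebraMap_apply]
      _ = φ p₁ := h3.symm
  have htr : Transcendental ℂ f := by
    intro halg
    have hint : IsIntegral ℂ f := isAlgebraic_iff_isIntegral.mp halg
    have h1 : (minpoly ℂ f).degree = 1 :=
      IsAlgClosed.degree_eq_one_of_irreducible ℂ (minpoly.irreducible hint)
    have h0 := minpoly.aeval ℂ f
    rw [Polynomial.eq_X_add_C_of_degree_eq_one h1, (minpoly.monic hint).leadingCoeff, map_one,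
      one_mul, map_add, aeval_X, aeval_C, add_eq_zero_iff_eq_neg] at h0
    refine hfr (-(minpoly ℂ f).coeff 0) ?_
    rw [map_neg]; exact h0
  rw [Fintype.linearIndependent_iff]
  intro c hc
  -- map the relation into K
  have hK : (∑ i : Fin (d + 1), c i • f ^ (i : ℕ)) * φ p₂ ^ d = 0 := by
    have := congrArg φ hc
    rw [map_sum, map_zero] at this
    rw [Finset.sum_mul, ← this]
    refine Finset.sum_congr rfl fun i _ => ?_
    have hle : (i : ℕ) ≤ d := Nat.lt_succ_iff.mp i.2
    have hsm : ∀ (a : ℂ) (p : Polynomial ℂ), φ (a • p) = a • φ p := fun a p => by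
      rw [Algebra.smul_def, map_mul, ← IsScalarTower.algebraMap_apply, ← Algebra.smul_def]
    rw [hsm, smul_mul_assoc, map_mul, map_pow, map_pow]
    congr 1
    rw [hfdef, div_pow, pow_sub₀ _ hφ2 hle]
    ring
  have hK2 : (∑ i : Fin (d + 1), c i • f ^ (i : ℕ)) = 0 :=
    (mul_eq_zero.mp hK).resolve_right (pow_ne_zero _ hφ2)
  -- transcendence kills the polynomial ∑ c i X^i
  set g : Polynomial ℂ := ∑ i : Fin (d + 1), C (c i) * X ^ (i : ℕ) with hg
  have hag : aeval f g = 0 := by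
    rw [hg, map_sum, ← hK2]
    refine Finset.sum_congr rfl fun i _ => ?_
    rw [map_mul, aeval_C, map_pow, aeval_X, Algebra.smul_def]
  have hg0 : g = 0 := by
    by_contra h
    exact htr ⟨g, h, hag⟩
  intro i
  have : g.coeff (i : ℕ) = c i := by
    rw [hg, finset_sum_coeff]
    rw [Finset.sum_eq_single i]
    · simp
    · intro b _ hb
      rw [coeff_C_mul, coeff_X_pow, if_neg (by simpa [Fin.val_eq_val] using (Ne.symm hb)), mul_zero]
    · simp
  rw [hg0] at this
  simpa using this.symm

/-- If `g k = ∑ i, (u i).coeff k • v i` with `u` linearly independent, then each `v i`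
lies in the span of the `g k`'s. -/
lemma mem_span_of_coeff_combo {N : ℕ} {V : Type*} [AddCommGroup V] [Module ℂ V]
    (u : Fin N → Polynomial ℂ) (hu : LinearIndependent ℂ u) (v : Fin N → V)
    (g : ℕ → V) (hg : ∀ k, g k = ∑ i, (u i).coeff k • v i) (i : Fin N) :
    v i ∈ Submodule.span ℂ (Set.range g) := by
  set row : ℕ → (Fin N → ℂ) := fun k => fun i => (u i).coeff k with hrow
  set S : Submodule ℂ (Fin N → ℂ) := Submodule.span ℂ (Set.range row) with hS
  have hmem : Pi.single i (1 : ℂ) ∈ S := by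
    by_contra h
    obtain ⟨ψ, hψ1, hψ2⟩ := Submodule.exists_dual_map_eq_bot_of_notMem h inferInstance
    -- μ j := ψ (e_j)
    set μ : Fin N → ℂ := fun j => ψ (Pi.single j 1) with hμ
    have hψx : ∀ x : Fin N → ℂ, ψ x = ∑ j, x j * μ j := by
      intro x
      have hx : x = ∑ j, Pi.single j (x j) := (Finset.univ_sum_single x).symm
      conv_lhs => rw [hx]
      rw [map_sum]
      refine Finset.sum_congr rfl fun j _ => ?_
      have h1 : Pi.single j (x j) = (x j) • (Pi.single j (1 : ℂ) : Fin N → ℂ) := by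
        rw [← Pi.single_smul, smul_eq_mul, mul_one]
      rw [h1, map_smul, smul_eq_mul, hμ]
    have hker : ∀ k, ψ (row k) = 0 := by
      intro k
      have : ψ (row k) ∈ Submodule.map ψ S := ⟨row k, Submodule.subset_span ⟨k, rfl⟩, rfl⟩
      rw [hψ2] at this
      simpa using this
    have hpoly : (∑ j, μ j • u j) = 0 := by
      ext k
      rw [finset_sum_coeff]
      have := hker k
      rw [hψx] at this
      simpa [hrow, mul_comm] using this
    have : ∀ j, μ j = 0 := by
      have := Fintype.linearIndependent_iff.mp hu μ hpoly
      exact this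
    apply hψ1
    rw [hψx]
    simp [Pi.single_apply, this]
  -- push through the linear map λ ↦ ∑ λ j • v j
  set Φ : (Fin N → ℂ) →ₗ[ℂ] V := Fintype.linearCombination ℂ v with hΦ
  have hΦrow : ∀ k, Φ (row k) = g k := by
    intro k
    rw [hg k, hΦ]
    simp [Fintype.linearCombination_apply, hrow]
  have : Φ (Pi.single i 1) ∈ Submodule.map Φ S := ⟨_, hmem, rfl⟩
  have hsub : Submodule.map Φ S ≤ Submodule.span ℂ (Set.range g) := by
    rw [hS, Submodule.map_span, Submodule.span_le]
    rintro x ⟨y, ⟨k, rfl⟩, rfl⟩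
    exact Submodule.subset_span ⟨k, (hΦrow k).symm⟩
  have hΦi : Φ (Pi.single i 1) = v i := by
    rw [hΦ]
    simp [Fintype.linearCombination_apply, Pi.single_apply]
  rw [hΦi] at this
  exact hsub this

/-- Linear independence of truncated coefficient vectors. -/
lemma coeffVec_li {N m : ℕ} (s : Fin N → Polynomial ℂ) (hs : LinearIndependent ℂ s)
    (hdeg : ∀ i, (s i).natDegree ≤ m) :
    LinearIndependent ℂ (fun i => fun j : Fin (m + 1) => (s i).coeff (j : ℕ)) := by
  rw [Fintype.linearIndependent_iff] at hs ⊢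
  intro c hc
  apply hs
  ext k
  rw [finset_sum_coeff, coeff_zero]
  by_cases h : k ≤ m
  · have := congrFun hc ⟨k, Nat.lt_succ_of_le h⟩
    simpa [Finset.sum_apply] using this
  · refine Finset.sum_eq_zero fun i _ => ?_
    rw [coeff_smul, coeff_eq_zero_of_natDegree_lt (lt_of_le_of_lt (hdeg i) (by omega)), smul_zero]


/-- Coefficient matrix of a bivariate polynomial `P ∈ (ℂ[w])[z]`:
entry `(j, k)` is the coefficient of `z^j w^k`. -/
noncomputable def coeffMatrix (m n : ℕ) (P : Polynomial (Polynomial ℂ)) :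
    Matrix (Fin (m + 1)) (Fin (n + 1)) ℂ :=
  Matrix.of fun j k => (P.coeff (j : ℕ)).coeff (k : ℕ)

/-- If `Q(z,w) = p₁(w) q₁(z) + p₂(w) q₂(z)` with `{p₁, p₂}` and `{q₁, q₂}` each linearly
independent over `ℂ`, then for every `d ≥ 1` the coefficient matrix of `Q^d` (of any size
large enough to hold all the coefficients of `Q^d`) has rank exactly `d + 1`. -/
theorem stmt_5 (p₁ p₂ q₁ q₂ : Polynomial ℂ)
    (hp : LinearIndependent ℂ ![p₁, p₂]) (hq : LinearIndependent ℂ ![q₁, q₂])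
    (Q : Polynomial (Polynomial ℂ))
    (hQ : Q = Polynomial.C p₁ * q₁.map Polynomial.C + Polynomial.C p₂ * q₂.map Polynomial.C)
    (d m n : ℕ) (hd : 1 ≤ d)
    (hm : (Q ^ d).natDegree ≤ m)
    (hn : ∀ j, ((Q ^ d).coeff j).natDegree ≤ n) :
    (coeffMatrix m n (Q ^ d)).rank = d + 1 := by
  classical
  set r : Fin (d + 1) → Polynomial ℂ := fun i => q₁ ^ i.1 * q₂ ^ (d - i.1) with hr
  set s : Fin (d + 1) → Polynomial ℂ := fun i => p₁ ^ i.1 * p₂ ^ (d - i.1) with hs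
  have hrli : LinearIndependent ℂ r := pow_li q₁ q₂ hq d
  have hsli : LinearIndependent ℂ s := pow_li p₁ p₂ hp d
  have hchi : ∀ i : Fin (d + 1), (d.choose i.1 : ℂ) ≠ 0 := fun i =>
    Nat.cast_ne_zero.mpr (Nat.choose_pos (Nat.lt_succ_iff.mp i.2)).ne'
  -- scaled families
  have scale_li : ∀ u : Fin (d + 1) → Polynomial ℂ, LinearIndependent ℂ u →
      LinearIndependent ℂ (fun i : Fin (d + 1) => (d.choose i.1 : ℂ) • u i) := by
    intro u hu
    rw [Fintype.linearIndependent_iff] at hu ⊢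
    intro c hc i
    have h1 := hu (fun i : Fin (d + 1) => c i * (d.choose i.1 : ℂ))
      (by simpa [mul_smul] using hc) i
    exact (mul_eq_zero.mp h1).resolve_right (hchi i)
  have hrli' := scale_li r hrli
  have hsli' := scale_li s hsli
  -- the key coefficient identity
  have key : ∀ j k : ℕ, ((Q ^ d).coeff j).coeff k
      = ∑ i : Fin (d + 1), (r i).coeff j * ((d.choose i.1 : ℂ) * (s i).coeff k) := by
    intro j k
    have hterm : ∀ a b c : ℕ,
        (Polynomial.C p₁ * q₁.map Polynomial.C) ^ a *
            (Polynomial.C p₂ * q₂.map Polynomial.C) ^ b * (c : Polynomial (Polynomial ℂ))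
          = Polynomial.C (p₁ ^ a * p₂ ^ b * Polynomial.C (c : ℂ)) *
              ((q₁ ^ a * q₂ ^ b).map Polynomial.C) := by
      intro a b c
      rw [map_mul, map_mul, map_pow, map_pow, Polynomial.map_mul, Polynomial.map_pow,
        Polynomial.map_pow, Polynomial.C_eq_natCast, Polynomial.C_eq_natCast]
      ring
    rw [hQ, add_pow]
    rw [finset_sum_coeff, finset_sum_coeff, ← Fin.sum_univ_eq_sum_range]
    refine Finset.sum_congr rfl fun i _ => ?_
    rw [hterm, coeff_C_mul, coeff_map, coeff_mul_C, coeff_mul_C]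
    simp only [hr, hs]
    ring
  -- degree bound for s
  have hsdeg : ∀ i, (s i).natDegree ≤ n := by
    intro i
    have hg : ∀ j, (Q ^ d).coeff j
        = ∑ i : Fin (d + 1), (((d.choose i.1 : ℂ) • r i)).coeff j • s i := by
      intro j
      ext k
      rw [key j k, finset_sum_coeff]
      refine Finset.sum_congr rfl fun i _ => ?_
      rw [coeff_smul, coeff_smul, smul_eq_mul, smul_eq_mul]
      ring
    have hmem := mem_span_of_coeff_combo (fun i : Fin (d + 1) => (d.choose i.1 : ℂ) • r i)
      hrli' s (fun j => (Q ^ d).coeff j) hg i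
    have hle : Submodule.span ℂ (Set.range fun j => (Q ^ d).coeff j)
        ≤ Polynomial.degreeLE ℂ (n : WithBot ℕ) := by
      rw [Submodule.span_le]
      rintro x ⟨j, rfl⟩
      rw [SetLike.mem_coe, Polynomial.mem_degreeLE]
      exact natDegree_le_iff_degree_le.mp (hn j)
    have h2 := hle hmem
    rw [Polynomial.mem_degreeLE] at h2
    exact natDegree_le_iff_degree_le.mpr h2
  -- degree bound for r
  have hrdeg : ∀ i, (r i).natDegree ≤ m := by
    intro i
    set t : ℕ → Polynomial ℂ := fun k =>
      ∑ j ∈ Finset.range (m + 1), Polynomial.C (((Q ^ d).coeff j).coeff k) * X ^ j with ht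
    have htcoeff : ∀ k j, (t k).coeff j = ((Q ^ d).coeff j).coeff k := by
      intro k j
      rw [ht]
      simp only [finset_sum_coeff, coeff_C_mul, coeff_X_pow, mul_ite, mul_one, mul_zero]
      rw [Finset.sum_ite_eq]
      by_cases h : j ∈ Finset.range (m + 1)
      · rw [if_pos h]
      · rw [if_neg h]
        have hj : m < j := by simpa using h
        rw [coeff_eq_zero_of_natDegree_lt (lt_of_le_of_lt hm hj), coeff_zero]
    have hg : ∀ k, t k = ∑ i : Fin (d + 1), (((d.choose i.1 : ℂ) • s i)).coeff k • r i := by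
      intro k
      ext j
      rw [htcoeff k j, key j k, finset_sum_coeff]
      refine Finset.sum_congr rfl fun i _ => ?_
      rw [coeff_smul, coeff_smul, smul_eq_mul, smul_eq_mul]
      ring
    have hmem := mem_span_of_coeff_combo (fun i : Fin (d + 1) => (d.choose i.1 : ℂ) • s i)
      hsli' r t hg i
    have hle : Submodule.span ℂ (Set.range t) ≤ Polynomial.degreeLE ℂ (m : WithBot ℕ) := by
      rw [Submodule.span_le]
      rintro x ⟨k, rfl⟩
      rw [SetLike.mem_coe, Polynomial.mem_degreeLE, ht]
      refine (Polynomial.degree_sum_le _ _).trans ?_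
      rw [Finset.sup_le_iff]
      intro j hj
      refine (Polynomial.degree_C_mul_X_pow_le _ _).trans ?_
      exact_mod_cast Nat.lt_succ_iff.mp (Finset.mem_range.mp hj)
    have h2 := hle hmem
    rw [Polynomial.mem_degreeLE] at h2
    exact natDegree_le_iff_degree_le.mpr h2
  -- the factorization
  set A : Matrix (Fin (m + 1)) (Fin (d + 1)) ℂ := fun j i => (r i).coeff j.1 with hA
  set B : Matrix (Fin (d + 1)) (Fin (n + 1)) ℂ :=
    fun i k => (d.choose i.1 : ℂ) * (s i).coeff k.1 with hB
  have hfact : coeffMatrix m n (Q ^ d) = A * B := by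
    ext j k
    rw [Matrix.mul_apply]
    exact key j.1 k.1
  -- rank computations
  have hBrows : LinearIndependent ℂ (fun i => B i) := by
    have h1 := coeffVec_li (m := n) (fun i : Fin (d + 1) => (d.choose i.1 : ℂ) • s i) hsli'
      (fun i => ((Polynomial.natDegree_smul_le _ _).trans (hsdeg i)))
    have h2 : (fun i => B i) = fun i : Fin (d + 1) =>
        fun k : Fin (n + 1) => (((d.choose i.1 : ℂ) • s i)).coeff k.1 := by
      funext i k
      rw [hB, coeff_smul, smul_eq_mul]
    rw [h2]
    exact h1
  have hAcols : LinearIndependent ℂ (fun i => A.transpose i) :=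
    coeffVec_li (m := m) r hrli hrdeg
  have hrankB : B.rank = d + 1 := by
    rw [hBrows.rank_matrix, Fintype.card_fin]
  have hrankA : A.rank = d + 1 := by
    rw [← Matrix.rank_transpose]
    have := hAcols.rank_matrix
    rw [Fintype.card_fin] at this
    exact this
  have hBsurj : LinearMap.range B.mulVecLin = ⊤ := by
    apply Submodule.eq_top_of_finrank_eq
    rw [← Matrix.rank, hrankB, Module.finrank_pi, Fintype.card_fin]
  rw [hfact, Matrix.rank, Matrix.mulVecLin_mul, LinearMap.range_comp_of_range_eq_top _ hBsurj]
  exact hrankA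
end

section
/- Let R_1(z) and S_1(w) be nonconstant rational functions over ℂ and let d ≥ 2. Then the polynomial obtained by clearing denominators in (R_1(z) − S_1(w))^d cannot be written (up to a nonzero scalar) as the polynomial obtained by clearing denominators in R(z) − S(w) for any rational functions R in z and S in w; equivalently, if Q(z,w) is a bivariate polynomial whose coefficient matrix has rank 2 and Q is not a product of a polynomial in z alone times a polynomial in w alone, then for d ≥ 2 the coefficient matrix of Q^d has rank greater than 2. -/
open Polynomial

/- ### Auxiliary lemmas -/

/-- Truncation of a polynomial to its first `n+1` coefficients, as a linear map. -/
noncomputable def truncMap (n : ℕ) : Polynomial ℂ →ₗ[ℂ] (Fin (n+1) → ℂ) where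
  toFun p := fun k => p.coeff (k : ℕ)
  map_add' p q := by ext k; simp
  map_smul' r p := by ext k; simp

lemma span_deg_le (s : Set (Polynomial ℂ)) (n : ℕ) (h : ∀ p ∈ s, p.natDegree ≤ n) :
    ∀ p ∈ Submodule.span ℂ s, p.natDegree ≤ n := by
  intro p hp
  have hle : Submodule.span ℂ s ≤ Polynomial.degreeLE ℂ n := by
    rw [Submodule.span_le]
    intro x hx
    show x ∈ Polynomial.degreeLE ℂ n
    rw [Polynomial.mem_degreeLE]
    exact Polynomial.degree_le_of_natDegree_le (h x hx)
  have hd := hle hp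
  rw [Polynomial.mem_degreeLE] at hd
  by_cases h0 : p = 0
  · simp [h0]
  · exact Polynomial.natDegree_le_iff_degree_le.2 hd

lemma trunc_inj_on (n : ℕ) (V : Submodule ℂ (Polynomial ℂ))
    (hV : ∀ p ∈ V, p.natDegree ≤ n) :
    ∀ p ∈ V, truncMap n p = 0 → p = 0 := by
  intro p hp h0
  ext j
  rcases le_or_gt j n with hj | hj
  · have := congrFun h0 ⟨j, Nat.lt_succ_of_le hj⟩
    simpa [truncMap] using this
  · simp [Polynomial.coeff_eq_zero_of_natDegree_lt (lt_of_le_of_lt (hV p hp) hj)]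

lemma coeffMatrix_rank_eq (m n : ℕ) (P : Polynomial (Polynomial ℂ))
    (hn : ∀ j, (P.coeff j).natDegree ≤ n) :
    (coeffMatrix m n P).rank
      = Module.finrank ℂ (Submodule.span ℂ (Set.range fun j : Fin (m+1) => P.coeff (j:ℕ))) := by
  set V : Submodule ℂ (Polynomial ℂ) :=
    Submodule.span ℂ (Set.range fun j : Fin (m+1) => P.coeff (j:ℕ)) with hVdef
  have hVle : ∀ p ∈ V, p.natDegree ≤ n := by
    apply span_deg_le
    rintro x ⟨j, rfl⟩
    exact hn _
  rw [Matrix.rank_eq_finrank_span_row]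
  have hrow : (Set.range (coeffMatrix m n P))
      = truncMap n '' (Set.range fun j : Fin (m+1) => P.coeff (j:ℕ)) := by
    rw [← Set.range_comp]
    rfl
  rw [show Set.range (coeffMatrix m n P).row = Set.range (coeffMatrix m n P) from rfl, hrow,
    ← Submodule.map_span]
  have hinj : Function.Injective ((truncMap n).comp V.subtype) := by
    rw [← LinearMap.ker_eq_bot, LinearMap.ker_eq_bot']
    rintro ⟨p, hp⟩ hp0
    have h1 : truncMap n p = 0 := hp0
    exact Subtype.ext (trunc_inj_on n V hVle p hp h1)
  have hr : LinearMap.range ((truncMap n).comp V.subtype) = V.map (truncMap n) := by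
    rw [LinearMap.range_comp, Submodule.range_subtype]
  rw [← hr]
  exact LinearMap.finrank_range_of_inj hinj

lemma alg_elem_mem {K : Type*} [Field K] [Algebra ℂ K] (t : K) (p : Polynomial ℂ)
    (hp : p ≠ 0) (h : Polynomial.aeval t p = 0) : ∃ r : ℂ, t = algebraMap ℂ K r := by
  have halg : IsAlgebraic ℂ t := ⟨p, hp, h⟩
  have hint : IsIntegral ℂ t := halg.isIntegral
  have hirr := minpoly.irreducible hint
  have hdeg : (minpoly ℂ t).degree = 1 := IsAlgClosed.degree_eq_one_of_irreducible ℂ hirr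
  have hrepr := Polynomial.eq_X_add_C_of_degree_le_one (le_of_eq hdeg)
  have hc1 : (minpoly ℂ t).coeff 1 = 1 := by
    have hm := minpoly.monic hint
    have : (minpoly ℂ t).natDegree = 1 := Polynomial.natDegree_eq_of_degree_eq_some hdeg
    rw [← this]
    exact hm.coeff_natDegree
  have haev := minpoly.aeval ℂ t
  rw [hrepr, hc1] at haev
  simp only [map_add, map_mul, Polynomial.aeval_X, Polynomial.aeval_C, map_one, one_mul] at haev
  exact ⟨-((minpoly ℂ t).coeff 0), by rw [map_neg]; linear_combination haev⟩

lemma pow_indep (u v : Polynomial ℂ) (d : ℕ)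
    (H : ∀ s t : ℂ, s • u + t • v = 0 → s = 0 ∧ t = 0) :
    LinearIndependent ℂ (fun k : Fin (d+1) => u ^ (k:ℕ) * v ^ (d - (k:ℕ))) := by
  have hv : v ≠ 0 := by
    intro h0
    have := (H 0 1 (by simp [h0])).2
    norm_num at this
  rw [Fintype.linearIndependent_iff]
  intro g hg
  set K := RatFunc ℂ
  set φ := algebraMap (Polynomial ℂ) K with hφ
  have hφinj : Function.Injective φ := IsFractionRing.injective _ _
  have hV : φ v ≠ 0 := fun h => hv (hφinj (by simpa using h))
  set t : K := φ u / φ v with ht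
  set p : Polynomial ℂ := ∑ k : Fin (d+1), Polynomial.C (g k) * Polynomial.X ^ (k:ℕ) with hp
  have hcoeff : ∀ k : Fin (d+1), p.coeff (k:ℕ) = g k := by
    intro k
    rw [hp, Polynomial.finset_sum_coeff]
    rw [Finset.sum_eq_single k]
    · simp
    · intro i _ hik
      have : (i:ℕ) ≠ (k:ℕ) := fun h => hik (Fin.ext h)
      simp [Polynomial.coeff_C_mul, Polynomial.coeff_X_pow, Ne.symm this]
    · simp
  have hp0 : p = 0 := by
    by_contra hpne
    have hterm : ∀ k : Fin (d+1), t ^ (k:ℕ) * φ v ^ d = φ u ^ (k:ℕ) * φ v ^ (d - (k:ℕ)) := by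
      intro k
      have hvk : φ v ^ (k:ℕ) ≠ 0 := pow_ne_zero _ hV
      rw [ht, div_pow, div_mul_eq_mul_div, div_eq_iff hvk, mul_assoc, ← pow_add,
        Nat.sub_add_cancel (Nat.lt_succ_iff.mp k.isLt)]
    have hsum : (Polynomial.aeval t p) * φ v ^ d = 0 := by
      rw [hp, map_sum, Finset.sum_mul]
      have : ∀ k : Fin (d+1),
          (Polynomial.aeval t (Polynomial.C (g k) * Polynomial.X ^ (k:ℕ))) * φ v ^ d
          = φ ((g k) • (u ^ (k:ℕ) * v ^ (d - (k:ℕ)))) := by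
        intro k
        rw [map_mul, Polynomial.aeval_C, map_pow, Polynomial.aeval_X]
        rw [mul_assoc, hterm k]
        have hC : φ (Polynomial.C (g k)) = algebraMap ℂ K (g k) := by
          rw [hφ, ← Polynomial.algebraMap_eq, ← IsScalarTower.algebraMap_apply]
        rw [Polynomial.smul_eq_C_mul, map_mul, map_mul, map_pow, map_pow, hC]
      rw [Finset.sum_congr rfl (fun k _ => this k), ← map_sum, hg, map_zero]
    have haev : Polynomial.aeval t p = 0 := by
      rcases mul_eq_zero.mp hsum with h | h
      · exact h
      · exact absurd h (pow_ne_zero _ hV)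
    obtain ⟨r, hr⟩ := alg_elem_mem t p hpne haev
    have hueq : φ u = φ (r • v) := by
      rw [Polynomial.smul_eq_C_mul, map_mul]
      have : φ (Polynomial.C r) = algebraMap ℂ K r := by
        rw [hφ, ← Polynomial.algebraMap_eq, ← IsScalarTower.algebraMap_apply]
      rw [this, ← hr, ht, div_mul_cancel₀ _ hV]
    have := (H (-1) r (by rw [neg_smul, one_smul, neg_add_eq_zero]; exact (hφinj hueq).symm ▸ rfl)).1
    norm_num at this
  intro k
  rw [← hcoeff k, hp0]
  simp

/-- Truncated coefficient vectors of independent polynomials of degree `≤ n`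
are independent. -/
lemma coeffvec_indep {N n : ℕ} (f : Fin N → Polynomial ℂ)
    (hf : LinearIndependent ℂ f) (hdeg : ∀ k, (f k).natDegree ≤ n) :
    LinearIndependent ℂ (fun k => truncMap n (f k)) := by
  have hdisj : Disjoint (Submodule.span ℂ (Set.range f)) (LinearMap.ker (truncMap n)) := by
    rw [Submodule.disjoint_def]
    intro x hx hker
    exact trunc_inj_on n _ (span_deg_le _ n (by rintro p ⟨k, rfl⟩; exact hdeg k)) x hx hker
  exact hf.map hdisj

/-- If `Q(z,w)` is a bivariate polynomial whose coefficient matrix has rank `2` and `Q`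
is not a product of a polynomial in `z` alone times a polynomial in `w` alone, then for
`d ≥ 2` the coefficient matrix of `Q^d` has rank greater than `2` (equivalently, `Q^d = 0`
cannot be written in the separated form `R(z) = S(w)`). -/
theorem stmt_7 (Q : Polynomial (Polynomial ℂ)) (m n m' n' d : ℕ)
    (hm : Q.natDegree ≤ m) (hn : ∀ j, (Q.coeff j).natDegree ≤ n)
    (hrank : (coeffMatrix m n Q).rank = 2)
    (hnotprod : ¬ ∃ q T : Polynomial ℂ, Q = Polynomial.C T * q.map Polynomial.C)
    (hd : 2 ≤ d)
    (hm' : (Q ^ d).natDegree ≤ m') (hn' : ∀ j, ((Q ^ d).coeff j).natDegree ≤ n') :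
    2 < (coeffMatrix m' n' (Q ^ d)).rank := by
  classical
  -- Q ≠ 0
  have hQ0 : Q ≠ 0 := by
    rintro rfl
    rw [show coeffMatrix m n 0 = 0 from by ext j k; simp [coeffMatrix], Matrix.rank_zero] at hrank
    norm_num at hrank
  -- the span of the coefficients has dimension 2
  set V : Submodule ℂ (Polynomial ℂ) :=
    Submodule.span ℂ (Set.range fun j : Fin (m+1) => Q.coeff (j:ℕ)) with hVdef
  have hVfin : Module.finrank ℂ V = 2 := by
    rw [← coeffMatrix_rank_eq m n Q hn, hrank]
  have hVfd : FiniteDimensional ℂ V := FiniteDimensional.span_of_finite ℂ (Set.finite_range _)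
  -- basis b, e of V
  obtain ⟨BB⟩ : Nonempty (Module.Basis (Fin 2) ℂ V) := ⟨Module.finBasisOfFinrankEq ℂ V hVfin⟩
  set b : Polynomial ℂ := ((BB 0 : V) : Polynomial ℂ) with hbdef
  set e : Polynomial ℂ := ((BB 1 : V) : Polynomial ℂ) with hedef
  have Hbe : ∀ s t : ℂ, s • b + t • e = 0 → s = 0 ∧ t = 0 := by
    intro s t hst
    have h2 : LinearIndependent ℂ (fun i : Fin 2 => ((BB i : V) : Polynomial ℂ)) :=
      BB.linearIndependent.map' V.subtype (Submodule.ker_subtype V)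
    rw [Fintype.linearIndependent_iff] at h2
    have h3 := h2 ![s, t] (by rw [Fin.sum_univ_two]; simpa using hst)
    exact ⟨h3 0, h3 1⟩
  -- membership of all coefficients
  have hmem : ∀ j : ℕ, Q.coeff j ∈ V := by
    intro j
    rcases lt_or_ge j (m+1) with hj | hj
    · exact Submodule.subset_span ⟨⟨j, hj⟩, rfl⟩
    · rw [Polynomial.coeff_eq_zero_of_natDegree_lt (lt_of_le_of_lt hm hj)]
      exact V.zero_mem
  set α : ℕ → ℂ := fun j => BB.repr ⟨Q.coeff j, hmem j⟩ 0 with hαdef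
  set γ : ℕ → ℂ := fun j => BB.repr ⟨Q.coeff j, hmem j⟩ 1 with hγdef
  have hreprQ : ∀ j : ℕ, Q.coeff j = α j • b + γ j • e := by
    intro j
    have h := BB.sum_repr ⟨Q.coeff j, hmem j⟩
    rw [Fin.sum_univ_two] at h
    have h2 := congrArg (fun x : V => (x : Polynomial ℂ)) h
    simpa using h2.symm
  set a : Polynomial ℂ := ∑ j ∈ Finset.range (m+1), Polynomial.C (α j) * Polynomial.X ^ j with hadef
  set c : Polynomial ℂ := ∑ j ∈ Finset.range (m+1), Polynomial.C (γ j) * Polynomial.X ^ j with hcdef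
  have hacoeff : ∀ j, a.coeff j = if j < m + 1 then α j else 0 := by
    intro j
    rw [hadef, Polynomial.finset_sum_coeff]
    simp only [Polynomial.coeff_C_mul, Polynomial.coeff_X_pow, mul_ite, mul_one, mul_zero]
    rw [Finset.sum_ite_eq]
    simp [Finset.mem_range]
  have hccoeff : ∀ j, c.coeff j = if j < m + 1 then γ j else 0 := by
    intro j
    rw [hcdef, Polynomial.finset_sum_coeff]
    simp only [Polynomial.coeff_C_mul, Polynomial.coeff_X_pow, mul_ite, mul_one, mul_zero]
    rw [Finset.sum_ite_eq]
    simp [Finset.mem_range]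
  have Qeq : Q = a.map Polynomial.C * Polynomial.C b + c.map Polynomial.C * Polynomial.C e := by
    apply Polynomial.ext
    intro j
    rw [Polynomial.coeff_add, Polynomial.coeff_mul_C, Polynomial.coeff_mul_C,
      Polynomial.coeff_map, Polynomial.coeff_map, hacoeff j, hccoeff j]
    rcases lt_or_ge j (m+1) with hj | hj
    · rw [if_pos hj, if_pos hj, hreprQ j, Polynomial.smul_eq_C_mul, Polynomial.smul_eq_C_mul]
    · rw [if_neg (not_lt.2 hj), if_neg (not_lt.2 hj),
        Polynomial.coeff_eq_zero_of_natDegree_lt (lt_of_le_of_lt hm hj)]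
      simp
  -- a, c are independent (else Q would be a product)
  have key1 : ∀ s t : ℂ, t ≠ 0 → s • a + t • c = 0 → False := by
    intro s t ht h
    set r : ℂ := t⁻¹ * (-s) with hrdef
    have hc : c = r • a := by
      have h2 : t • c = (-s) • a := by
        rw [neg_smul]
        linear_combination (norm := module) h
      rw [hrdef, mul_smul, ← h2, smul_smul, inv_mul_cancel₀ ht, one_smul]
    apply hnotprod
    refine ⟨a, b + r • e, ?_⟩
    rw [Qeq, hc]
    have h1 : ((r • a).map (Polynomial.C : ℂ →+* Polynomial ℂ))
        = Polynomial.C (Polynomial.C r) * a.map Polynomial.C := by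
      rw [Polynomial.smul_eq_C_mul, Polynomial.map_mul, Polynomial.map_C]
    rw [h1, Polynomial.smul_eq_C_mul, map_add, map_mul]
    simp only [map_mul]
    ring
  have key2 : ∀ s t : ℂ, s ≠ 0 → s • a + t • c = 0 → False := by
    intro s t hs h
    set r : ℂ := s⁻¹ * (-t) with hrdef
    have ha : a = r • c := by
      have h2 : s • a = (-t) • c := by
        rw [neg_smul]
        linear_combination (norm := module) h
      rw [hrdef, mul_smul, ← h2, smul_smul, inv_mul_cancel₀ hs, one_smul]
    apply hnotprod
    refine ⟨c, r • b + e, ?_⟩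
    rw [Qeq, ha]
    have h1 : ((r • c).map (Polynomial.C : ℂ →+* Polynomial ℂ))
        = Polynomial.C (Polynomial.C r) * c.map Polynomial.C := by
      rw [Polynomial.smul_eq_C_mul, Polynomial.map_mul, Polynomial.map_C]
    rw [h1, Polynomial.smul_eq_C_mul, map_add, map_mul]
    simp only [map_mul]
    ring
  have Hac : ∀ s t : ℂ, s • a + t • c = 0 → s = 0 ∧ t = 0 := by
    intro s t hst
    constructor
    · by_contra hs
      exact key2 s t hs hst
    · by_contra ht
      exact key1 s t ht hst
  -- degree bounds
  have hdega : a.natDegree ≤ Q.natDegree := by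
    rw [Polynomial.natDegree_le_iff_coeff_eq_zero]
    intro N hN
    have hQN : Q.coeff N = 0 := Polynomial.coeff_eq_zero_of_natDegree_lt hN
    have h := Hbe (α N) (γ N) (by rw [← hreprQ N, hQN])
    rw [hacoeff N]
    split_ifs
    · exact h.1
    · rfl
  have hdegc : c.natDegree ≤ Q.natDegree := by
    rw [Polynomial.natDegree_le_iff_coeff_eq_zero]
    intro N hN
    have hQN : Q.coeff N = 0 := Polynomial.coeff_eq_zero_of_natDegree_lt hN
    have h := Hbe (α N) (γ N) (by rw [← hreprQ N, hQN])
    rw [hccoeff N]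
    split_ifs
    · exact h.2
    · rfl
  -- w-degree bound: d * μ ≤ n' where μ bounds w-degrees of coefficients of Q
  set μ : ℕ := Q.support.sup fun j => (Q.coeff j).natDegree with hμdef
  have hμ : ∀ j, (Q.coeff j).natDegree ≤ μ := by
    intro j
    by_cases hj : j ∈ Q.support
    · exact Finset.le_sup (f := fun j => (Q.coeff j).natDegree) hj
    · rw [Polynomial.notMem_support_iff.mp hj]
      simp
  have hbμ : b.natDegree ≤ μ := by
    refine span_deg_le _ μ ?_ b (BB 0).2
    rintro p ⟨j, rfl⟩
    exact hμ _
  have heμ : e.natDegree ≤ μ := by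
    refine span_deg_le _ μ ?_ e (BB 1).2
    rintro p ⟨j, rfl⟩
    exact hμ _
  have hμn' : d * μ ≤ n' := by
    obtain ⟨j2, hj2mem, hj2⟩ := Finset.exists_mem_eq_sup Q.support
      (Polynomial.support_nonempty.mpr hQ0) (fun j => (Q.coeff j).natDegree)
    set tp : Polynomial ℂ :=
      ∑ j ∈ Q.support, Polynomial.C ((Q.coeff j).coeff μ) * Polynomial.X ^ j with htpdef
    have htpc : ∀ j, tp.coeff j = if j ∈ Q.support then (Q.coeff j).coeff μ else 0 := by
      intro j
      rw [htpdef, Polynomial.finset_sum_coeff]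
      simp only [Polynomial.coeff_C_mul, Polynomial.coeff_X_pow, mul_ite, mul_one, mul_zero]
      rw [Finset.sum_ite_eq]
    have htp0 : tp ≠ 0 := by
      intro h0
      have h1 : tp.coeff j2 = (Q.coeff j2).coeff μ := by rw [htpc j2, if_pos hj2mem]
      have h2 : (Q.coeff j2).coeff μ ≠ 0 := by
        rw [hμdef, hj2]
        exact Polynomial.leadingCoeff_ne_zero.mpr (Polynomial.mem_support_iff.mp hj2mem)
      rw [h0] at h1
      exact h2 (by simpa using h1.symm)
    obtain ⟨z0, hz0⟩ : ∃ z0 : ℂ, tp.eval z0 ≠ 0 := by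
      have hcard : (tp.natDegree : Cardinal) < Cardinal.mk ℂ :=
        lt_of_lt_of_le (Cardinal.nat_lt_aleph0 _) (Cardinal.infinite_iff.mp inferInstance)
      exact tp.exists_eval_ne_zero_of_natDegree_lt_card htp0 hcard
    set E : Polynomial (Polynomial ℂ) →+* Polynomial ℂ :=
      Polynomial.evalRingHom (Polynomial.C z0) with hEdef
    have hEQsum : ∀ P : Polynomial (Polynomial ℂ),
        E P = ∑ j ∈ P.support, P.coeff j * Polynomial.C (z0 ^ j) := by
      intro P
      rw [hEdef]
      show Polynomial.eval (Polynomial.C z0) P = _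
      rw [Polynomial.eval_eq_sum, Polynomial.sum_def]
      refine Finset.sum_congr rfl (fun j hj => ?_)
      rw [← map_pow]
    have hEQcoeff : (E Q).coeff μ = tp.eval z0 := by
      rw [hEQsum Q, Polynomial.finset_sum_coeff, htpdef, Polynomial.eval_finset_sum]
      refine Finset.sum_congr rfl (fun j hj => ?_)
      rw [Polynomial.coeff_mul_C]
      simp
    have hne : (E Q).coeff μ ≠ 0 := hEQcoeff ▸ hz0
    have hEQdegle : (E Q).natDegree ≤ μ := by
      rw [hEQsum Q]
      refine Polynomial.natDegree_sum_le_of_forall_le _ _ (fun j hj => ?_)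
      refine Polynomial.natDegree_mul_le.trans ?_
      simpa using hμ j
    have hEQdeg : (E Q).natDegree = μ := le_antisymm hEQdegle (Polynomial.le_natDegree_of_ne_zero hne)
    have h1 : (E (Q ^ d)).natDegree = d * μ := by
      rw [map_pow, Polynomial.natDegree_pow, hEQdeg]
    have h2 : (E (Q ^ d)).natDegree ≤ n' := by
      rw [hEQsum (Q ^ d)]
      refine Polynomial.natDegree_sum_le_of_forall_le _ _ (fun j hj => ?_)
      refine Polynomial.natDegree_mul_le.trans ?_
      simpa using hn' j
    omega
  -- the families
  set f : Fin (d+1) → Polynomial ℂ := fun k => a ^ (k:ℕ) * c ^ (d - (k:ℕ)) with hfdef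
  set G : Fin (d+1) → Polynomial ℂ :=
    fun k => (d.choose (k:ℕ) : ℂ) • (b ^ (k:ℕ) * e ^ (d - (k:ℕ))) with hGdef
  have hfind : LinearIndependent ℂ f := pow_indep a c d Hac
  have hGind : LinearIndependent ℂ G := by
    have h1 := pow_indep b e d Hbe
    have := h1.units_smul (fun k => Units.mk0 ((d.choose (k:ℕ) : ℂ))
      (Nat.cast_ne_zero.mpr (Nat.choose_pos (Nat.lt_succ_iff.mp k.isLt)).ne'))
    exact this
  -- degree bounds for the families
  have hfdeg : ∀ k : Fin (d+1), (f k).natDegree ≤ m' := by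
    intro k
    have h1 : (f k).natDegree ≤ (k:ℕ) * Q.natDegree + (d - (k:ℕ)) * Q.natDegree :=
      Polynomial.natDegree_mul_le.trans
        (add_le_add (Polynomial.natDegree_pow_le_of_le _ hdega)
          (Polynomial.natDegree_pow_le_of_le _ hdegc))
    have h2 : (k:ℕ) * Q.natDegree + (d - (k:ℕ)) * Q.natDegree = d * Q.natDegree := by
      rw [← add_mul]
      congr 1
      have := Nat.lt_succ_iff.mp k.isLt
      omega
    have h3 : (Q ^ d).natDegree = d * Q.natDegree := Polynomial.natDegree_pow Q d
    omega
  have hGdeg : ∀ k : Fin (d+1), (G k).natDegree ≤ n' := by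
    intro k
    refine (Polynomial.natDegree_smul_le _ _).trans ?_
    have h1 : (b ^ (k:ℕ) * e ^ (d - (k:ℕ))).natDegree ≤ (k:ℕ) * μ + (d - (k:ℕ)) * μ :=
      Polynomial.natDegree_mul_le.trans
        (add_le_add (Polynomial.natDegree_pow_le_of_le _ hbμ)
          (Polynomial.natDegree_pow_le_of_le _ heμ))
    have h2 : (k:ℕ) * μ + (d - (k:ℕ)) * μ = d * μ := by
      rw [← add_mul]
      congr 1
      have := Nat.lt_succ_iff.mp k.isLt
      omega
    omega
  -- expansion of Q^d
  have hQd : Q ^ d = ∑ k ∈ Finset.range (d+1),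
      (a ^ k * c ^ (d-k)).map Polynomial.C *
        Polynomial.C ((d.choose k : ℂ) • (b ^ k * e ^ (d-k))) := by
    conv_lhs => rw [Qeq]
    rw [add_pow]
    refine Finset.sum_congr rfl (fun k hk => ?_)
    rw [mul_pow, mul_pow, Polynomial.map_mul, Polynomial.map_pow, Polynomial.map_pow,
      Polynomial.smul_eq_C_mul, map_mul, map_mul, map_pow, map_pow,
      Polynomial.C_eq_natCast, Polynomial.C_eq_natCast]
    ring
  -- matrix factorization
  set F : Matrix (Fin (m'+1)) (Fin (d+1)) ℂ := Matrix.of fun j k => (f k).coeff (j:ℕ) with hFdef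
  set Gm : Matrix (Fin (d+1)) (Fin (n'+1)) ℂ := Matrix.of fun k l => (G k).coeff (l:ℕ) with hGmdef
  have hfact : coeffMatrix m' n' (Q ^ d) = F * Gm := by
    ext j l
    rw [Matrix.mul_apply]
    have hL : (coeffMatrix m' n' (Q ^ d)) j l
        = ∑ k ∈ Finset.range (d+1),
            (a ^ k * c ^ (d - k)).coeff (j:ℕ)
              * (((d.choose k : ℂ) • (b ^ k * e ^ (d - k))).coeff (l:ℕ)) := by
      show ((Q ^ d).coeff (j:ℕ)).coeff (l:ℕ) = _
      rw [hQd, Polynomial.finset_sum_coeff]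
      rw [show (∑ k ∈ Finset.range (d+1),
            ((a ^ k * c ^ (d-k)).map Polynomial.C
              * Polynomial.C ((d.choose k : ℂ) • (b ^ k * e ^ (d-k)))).coeff (j:ℕ))
          = ∑ k ∈ Finset.range (d+1),
              Polynomial.C ((a ^ k * c ^ (d-k)).coeff (j:ℕ))
                * ((d.choose k : ℂ) • (b ^ k * e ^ (d-k))) from
        Finset.sum_congr rfl (fun k hk => by rw [Polynomial.coeff_mul_C, Polynomial.coeff_map])]
      rw [Polynomial.finset_sum_coeff]
      exact Finset.sum_congr rfl (fun k hk => Polynomial.coeff_C_mul _)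
    rw [hL, hFdef, hGmdef]
    exact (Fin.sum_univ_eq_sum_range
      (fun k => (a ^ k * c ^ (d - k)).coeff (j:ℕ)
        * (((d.choose k : ℂ) • (b ^ k * e ^ (d - k))).coeff (l:ℕ))) (d+1)).symm
  -- ranks
  have hrankF : F.rank = d + 1 := by
    have : F.transpose.rank = d + 1 := by
      have hrows : LinearIndependent ℂ F.transpose := by
        have := coeffvec_indep f hfind hfdeg
        exact this
      exact hrows.rank_matrix.trans (Fintype.card_fin _)
    rw [← Matrix.rank_transpose, this]
  have hrankGm : Gm.rank = d + 1 := by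
    have hrows : LinearIndependent ℂ Gm := by
      have := coeffvec_indep G hGind hGdeg
      exact this
    simpa using hrows.rank_matrix
  have hGsurj : LinearMap.range Gm.mulVecLin = ⊤ := by
    apply Submodule.eq_top_of_finrank_eq
    rw [← Matrix.rank] at *
    rw [hrankGm]
    simp [Module.finrank_pi]
  have : (F * Gm).rank = d + 1 := by
    rw [Matrix.rank, Matrix.mulVecLin_mul, LinearMap.range_comp, hGsurj, Submodule.map_top,
      ← Matrix.rank, hrankF]
  rw [hfact, this]
  omega
end

section
/- Let P(z,w) be a bivariate polynomial over ℂ such that P(z̄, w̄) = 0 whenever P(z,w) = 0 and conversely (i.e., the zero set is invariant under coordinatewise conjugation), and assume P has no repeated factors. Then there is a nonzero constant λ ∈ ℂ such that λ·P has all real coefficients. -/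
open Polynomial

noncomputable def e2 : MvPolynomial (Fin 2) ℂ ≃ₐ[ℂ] Polynomial (Polynomial ℂ) :=
  (MvPolynomial.finSuccEquiv ℂ 1).trans <|
    Polynomial.mapAlgEquiv <|
      (MvPolynomial.finSuccEquiv ℂ 0).trans <|
        Polynomial.mapAlgEquiv (MvPolynomial.isEmptyAlgEquiv ℂ (Fin 0))

lemma e2_eval (Q : MvPolynomial (Fin 2) ℂ) (z w : ℂ) :
    ((e2 Q).eval (Polynomial.C z)).eval w = MvPolynomial.eval ![z, w] Q := by
  have h : (Polynomial.evalRingHom w).comp ((Polynomial.evalRingHom (Polynomial.C z)).comp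
      (e2 : MvPolynomial (Fin 2) ℂ →+* Polynomial (Polynomial ℂ)))
      = (MvPolynomial.eval ![z, w]) := by
    apply MvPolynomial.ringHom_ext
    · intro a
      simp [e2, MvPolynomial.finSuccEquiv_apply]
      exact MvPolynomial.coeff_zero_C a
    · intro i
      refine Fin.cases ?_ (fun j => ?_) i
      · simp [e2, MvPolynomial.finSuccEquiv_X_zero]
      · obtain rfl : j = 0 := Subsingleton.elim _ _
        have h1 : (MvPolynomial.finSuccEquiv ℂ 1) (MvPolynomial.X (1 : Fin 2))
            = Polynomial.C (MvPolynomial.X 0) := MvPolynomial.finSuccEquiv_X_succ (j := 0)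
        have h2 : (MvPolynomial.finSuccEquiv ℂ 0) (MvPolynomial.X (0 : Fin 1))
            = Polynomial.X := MvPolynomial.finSuccEquiv_X_zero
        simp [e2, h1, h2]
  exact RingHom.congr_fun h Q

noncomputable def cj : Polynomial (Polynomial ℂ) →+* Polynomial (Polynomial ℂ) :=
  Polynomial.mapRingHom (Polynomial.mapRingHom (starRingEnd ℂ))

lemma cj_coeff (p : Polynomial (Polynomial ℂ)) (j k : ℕ) :
    ((cj p).coeff j).coeff k = starRingEnd ℂ ((p.coeff j).coeff k) := by
  simp [cj, Polynomial.coeff_map]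

lemma cj_cj (p : Polynomial (Polynomial ℂ)) : cj (cj p) = p := by
  ext j k
  simp [cj_coeff]

lemma squarefree_cj {p : Polynomial (Polynomial ℂ)} (h : Squarefree p) : Squarefree (cj p) := by
  intro x hx
  have h1 : cj x * cj x ∣ cj (cj p) := by rw [← map_mul]; exact map_dvd cj hx
  rw [cj_cj] at h1
  have h2 := (h _ h1).map cj
  rwa [cj_cj] at h2

lemma cj_eval1 (q : Polynomial ℂ) (w : ℂ) :
    (q.map (starRingEnd ℂ)).eval w = starRingEnd ℂ (q.eval (starRingEnd ℂ w)) := by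
  rw [Polynomial.eval_map,
    show q.eval (starRingEnd ℂ w) = q.eval₂ (RingHom.id ℂ) (starRingEnd ℂ w) from rfl,
    Polynomial.hom_eval₂]
  simp

lemma cj_eval (P : Polynomial (Polynomial ℂ)) (z w : ℂ) :
    (((cj P).eval (Polynomial.C z)).eval w)
      = starRingEnd ℂ ((P.eval (Polynomial.C (starRingEnd ℂ z))).eval (starRingEnd ℂ w)) := by
  induction P using Polynomial.induction_on' with
  | add p q hp hq => simp [map_add, hp, hq]
  | monomial n q =>
      simp only [cj, Polynomial.coe_mapRingHom, Polynomial.map_monomial,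
        Polynomial.eval_monomial, Polynomial.eval_mul, Polynomial.eval_pow,
        Polynomial.eval_C, map_mul, map_pow, cj_eval1, Complex.conj_conj]

lemma dvd_of_zeros (A B : Polynomial (Polynomial ℂ)) (hA : Squarefree A)
    (h : ∀ z w : ℂ, (A.eval (Polynomial.C z)).eval w = 0 → (B.eval (Polynomial.C z)).eval w = 0) :
    A ∣ B := by
  set Am := e2.symm A with hAm
  set Bm := e2.symm B with hBm
  have hAsf : Squarefree Am := by
    intro x hx
    have h1 : e2 x * e2 x ∣ e2 Am := by rw [← map_mul]; exact map_dvd (e2 : MvPolynomial (Fin 2) ℂ →+* Polynomial (Polynomial ℂ)) hx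
    rw [hAm, AlgEquiv.apply_symm_apply] at h1
    have h2 := (hA _ h1).map (e2.symm : Polynomial (Polynomial ℂ) →+* MvPolynomial (Fin 2) ℂ)
    rwa [RingHom.coe_coe, AlgEquiv.symm_apply_apply] at h2
  have hmem : Bm ∈ MvPolynomial.vanishingIdeal ℂ (MvPolynomial.zeroLocus ℂ (Ideal.span {Am})) := by
    rw [MvPolynomial.mem_vanishingIdeal_iff]
    intro x hx
    show MvPolynomial.eval x Bm = 0
    have hxA : MvPolynomial.eval x Am = 0 :=
      (MvPolynomial.mem_zeroLocus_iff.mp hx) Am (Ideal.subset_span rfl)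
    have hxv : ![x 0, x 1] = x := by
      funext i; fin_cases i <;> rfl
    have hA0 : (A.eval (Polynomial.C (x 0))).eval (x 1) = 0 := by
      have := e2_eval Am (x 0) (x 1)
      rw [hAm, AlgEquiv.apply_symm_apply, hxv] at this
      rw [this, hxA]
    have hB0 := h (x 0) (x 1) hA0
    have := e2_eval Bm (x 0) (x 1)
    rw [hBm, AlgEquiv.apply_symm_apply, hxv] at this
    rw [← this, hB0]
  rw [MvPolynomial.vanishingIdeal_zeroLocus_eq_radical] at hmem
  have hrad : (Ideal.span {Am}).radical = Ideal.span {Am} :=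
    le_antisymm (isRadical_iff_span_singleton.mp hAsf.isRadical) Ideal.le_radical
  rw [hrad, Ideal.mem_span_singleton] at hmem
  have := map_dvd e2 hmem
  rwa [hAm, hBm, AlgEquiv.apply_symm_apply, AlgEquiv.apply_symm_apply] at this

/-- If the zero set in `ℂ²` of a bivariate polynomial `P ∈ (ℂ[w])[z]` without repeated
factors is invariant under coordinatewise complex conjugation, then some nonzero scalar
multiple `λ·P` has all real coefficients. -/
theorem stmt_14 (P : Polynomial (Polynomial ℂ)) (hsf : Squarefree P)
    (hzero : ∀ z w : ℂ,
      (P.eval (Polynomial.C z)).eval w = 0 ↔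
        (P.eval (Polynomial.C (starRingEnd ℂ z))).eval (starRingEnd ℂ w) = 0) :
    ∃ l : ℂ, l ≠ 0 ∧ ∀ j k : ℕ, (((l • P).coeff j).coeff k).im = 0 := by
  have hP0 : P ≠ 0 := fun h => not_squarefree_zero (h ▸ hsf)
  have hQsf : Squarefree (cj P) := squarefree_cj hsf
  have hzz : ∀ z w : ℂ, (P.eval (Polynomial.C z)).eval w = 0 ↔
      ((cj P).eval (Polynomial.C z)).eval w = 0 := by
    intro z w
    rw [cj_eval, _root_.map_eq_zero]
    exact hzero z w
  have hPQ : P ∣ cj P := dvd_of_zeros P (cj P) hsf (fun z w h => (hzz z w).mp h)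
  have hQP : cj P ∣ P := dvd_of_zeros (cj P) P hQsf (fun z w h => (hzz z w).mpr h)
  obtain ⟨u, hu⟩ := associated_of_dvd_dvd hPQ hQP
  obtain ⟨r, hru, hrC⟩ := Polynomial.isUnit_iff.mp u.isUnit
  obtain ⟨c, hcu, hcC⟩ := Polynomial.isUnit_iff.mp hru
  have hc0 : c ≠ 0 := hcu.ne_zero
  have hconj : ∀ j k, starRingEnd ℂ ((P.coeff j).coeff k) = (P.coeff j).coeff k * c := by
    intro j k
    rw [← cj_coeff, ← hu, ← hrC, ← hcC, Polynomial.coeff_mul_C, Polynomial.coeff_mul_C]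
  obtain ⟨j, hj⟩ : ∃ j, P.coeff j ≠ 0 := by
    by_contra h
    push_neg at h
    exact hP0 (Polynomial.ext fun n => by simpa using h n)
  obtain ⟨k, hk⟩ : ∃ k, (P.coeff j).coeff k ≠ 0 := by
    by_contra h
    push_neg at h
    exact hj (Polynomial.ext fun n => by simpa using h n)
  have hcc : c * starRingEnd ℂ c = 1 := by
    have h1 := hconj j k
    have h2 := congrArg (starRingEnd ℂ) h1
    rw [Complex.conj_conj, map_mul, h1] at h2
    have h3 : (P.coeff j).coeff k * (c * starRingEnd ℂ c) = (P.coeff j).coeff k * 1 := by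
      rw [mul_one, ← mul_assoc]; exact h2.symm
    exact mul_left_cancel₀ hk h3
  obtain ⟨l, hl⟩ : ∃ l : ℂ, l ^ 2 = c := by
    exact IsAlgClosed.exists_pow_nat_eq c (by norm_num : (0:ℕ) < 2)
  have hl0 : l ≠ 0 := by
    intro h
    apply hc0
    rw [← hl, h]; ring
  have hnorm : l * starRingEnd ℂ l = 1 := by
    have h4 : (l * starRingEnd ℂ l) ^ 2 = 1 := by
      rw [mul_pow, ← map_pow, hl]; exact hcc
    have h5 : l * starRingEnd ℂ l = (Complex.normSq l : ℂ) := Complex.mul_conj l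
    rw [h5] at h4 ⊢
    have h4r : (Complex.normSq l) ^ 2 = 1 := by
      have := h4
      push_cast at this
      exact_mod_cast this
    have h6 : (Complex.normSq l - 1) * (Complex.normSq l + 1) = 0 := by nlinarith [h4r]
    rcases mul_eq_zero.mp h6 with h7 | h7
    · norm_cast
      linarith
    · have := Complex.normSq_nonneg l
      linarith
  have hcl : starRingEnd ℂ l * c = l := by
    rw [← hl, pow_two, ← mul_assoc, mul_comm (starRingEnd ℂ l) l, hnorm, one_mul]
  refine ⟨l, hl0, fun j' k' => ?_⟩
  have hcoeff : ((l • P).coeff j').coeff k' = l * (P.coeff j').coeff k' := by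
    simp [Polynomial.coeff_smul, smul_eq_mul]
  rw [hcoeff, ← Complex.conj_eq_iff_im, map_mul, hconj j' k']
  linear_combination ((P.coeff j').coeff k') * hcl
end
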